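/- Let p be an indeterminate and x a variable. Set L = x^2 - px - 1, l = -L/(p^2+4), and r = (x+2p)/(p^2+4) + (p^2+4)(px+2)/L^2 + (x(p+2) + p^2 - p + 6)/L - 5p/(2(p^2+4)). Then Lecacheux's polynomial Lec(p,r;l) = l^5 + (r^2(p^2+4) - 2p - 17/4) l^4 + (3r(p^2+4) + p^2 + 13p/2 + 5) l^3 - (r(p^2+4) + 11p/2 - 8) l^2 + (p-6) l + 1 vanishes identically as a rational function of p and x. -/

import Mathlib

/-- The field `ℚ(p, x)` realized as `RatFunc (RatFunc ℚ)`,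
with `p` the inner variable and `x` the outer variable. -/
noncomputable abbrev K3 : Type := RatFunc (RatFunc ℚ)

noncomputable def pv : K3 := RatFunc.C RatFunc.X

noncomputable def xv : K3 := RatFunc.X

/-- `L = x² - px - 1`. -/
noncomputable def Lv : K3 := xv ^ 2 - pv * xv - 1

/-- `l = -L/(p²+4)`. -/
noncomputable def lv : K3 := -Lv / (pv ^ 2 + 4)

/-- `r = (x+2p)/(p²+4) + (p²+4)(px+2)/L² + (x(p+2)+p²-p+6)/L - 5p/(2(p²+4))`. -/
noncomputable def rv : K3 :=
  (xv + 2 * pv) / (pv ^ 2 + 4) + (pv ^ 2 + 4) * (pv * xv + 2) / Lv ^ 2 +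
    (xv * (pv + 2) + (pv ^ 2 - pv + 6)) / Lv - 5 * pv / (2 * (pv ^ 2 + 4))

lemma hX2 : (RatFunc.X : RatFunc ℚ) ^ 2 + 4 ≠ 0 := by
  have : (RatFunc.X : RatFunc ℚ) ^ 2 + 4 =
      algebraMap (Polynomial ℚ) (RatFunc ℚ) (Polynomial.X ^ 2 + 4) := by
    simp [map_add, map_pow, RatFunc.algebraMap_X, map_ofNat]
  rw [this]
  apply RatFunc.algebraMap_ne_zero
  intro h
  have := congrArg (Polynomial.coeff · 0) h
  simp at this

lemma hp : pv ^ 2 + 4 ≠ 0 := by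
  have : pv ^ 2 + 4 = algebraMap (Polynomial (RatFunc ℚ)) K3
      (Polynomial.C ((RatFunc.X : RatFunc ℚ) ^ 2 + 4)) := by
    simp [pv, RatFunc.algebraMap_C, map_add, map_pow, map_ofNat]
  rw [this]
  apply RatFunc.algebraMap_ne_zero
  simpa only [ne_eq, Polynomial.C_eq_zero] using hX2

lemma hL : Lv ≠ 0 := by
  have : Lv = algebraMap (Polynomial (RatFunc ℚ)) K3
      (Polynomial.X ^ 2 - Polynomial.C (RatFunc.X : RatFunc ℚ) * Polynomial.X - 1) := by
    simp [Lv, pv, xv, RatFunc.algebraMap_C, RatFunc.algebraMap_X, map_sub, map_pow, map_mul]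
  rw [this]
  apply RatFunc.algebraMap_ne_zero
  intro h
  have := congrArg (Polynomial.coeff · 2) h
  simp [Polynomial.coeff_one] at this

instance : CharZero (RatFunc ℚ) :=
  charZero_of_injective_algebraMap (RatFunc.algebraMap_injective ℚ)

instance : CharZero K3 :=
  charZero_of_injective_algebraMap (RatFunc.algebraMap_injective (RatFunc ℚ))

local notation "D" => pv ^ 2 + 4
local notation "Lx" => xv ^ 2 - pv * xv - 1
local notation "Nr" => 2 * (xv + 2 * pv) * (xv ^ 2 - pv * xv - 1) ^ 2
      + 2 * (pv ^ 2 + 4) ^ 2 * (pv * xv + 2)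
      + 2 * (pv ^ 2 + 4) * (xv ^ 2 - pv * xv - 1) * (xv * (pv + 2) + pv ^ 2 - pv + 6)
      - 5 * pv * (xv ^ 2 - pv * xv - 1) ^ 2
local notation "M" => 4 * (pv ^ 2 + 4) ^ 5 * (xv ^ 2 - pv * xv - 1) ^ 4

set_option maxHeartbeats 4000000 in
/-- Lecacheux's polynomial `Lec(p, r; l)` vanishes identically under the stated substitutions. -/
theorem lecacheux_vanishes :
    lv ^ 5 + (rv ^ 2 * (pv ^ 2 + 4) - 2 * pv - 17 / 4) * lv ^ 4 +
      (3 * rv * (pv ^ 2 + 4) + pv ^ 2 + 13 / 2 * pv + 5) * lv ^ 3 -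
      (rv * (pv ^ 2 + 4) + 11 / 2 * pv - 8) * lv ^ 2 + (pv - 6) * lv + 1 = 0 := by

  have hLv : Lx ≠ 0 := hL
  have hpv : D ≠ 0 := hp
  have hr : rv = Nr / (2 * D * Lx ^ 2) := by
    simp only [rv, Lv]
    generalize xv ^ 2 - pv * xv - 1 = L at hLv ⊢
    field_simp [hLv, hpv]
    ring
  have hl : lv = -Lx / D := by simp only [lv, Lv]
  have hM : M ≠ 0 := by
    exact mul_ne_zero (mul_ne_zero (by norm_num : (4 : K3) ≠ 0) (pow_ne_zero _ hpv))
      (pow_ne_zero _ hLv)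
  have e1 : M * lv ^ 5 = -4 * Lx ^ 9 := by
    rw [hl]; field_simp [hpv]
  have e2 : M * ((rv ^ 2 * D - 2 * pv - 17 / 4) * lv ^ 4) =
      (Nr) ^ 2 * Lx ^ 4 + (-2 * pv - 17 / 4) * (4 * D * Lx ^ 8) := by
    rw [hl, hr]; generalize xv ^ 2 - pv * xv - 1 = L at hLv ⊢; field_simp [hpv, hLv]
    ring
  have e3 : M * ((3 * rv * D + pv ^ 2 + 13 / 2 * pv + 5) * lv ^ 3) =
      -6 * (Nr) * D ^ 2 * Lx ^ 5 + (pv ^ 2 + 13 / 2 * pv + 5) * (-4 * D ^ 2 * Lx ^ 7) := by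
    rw [hl, hr]; generalize xv ^ 2 - pv * xv - 1 = L at hLv ⊢; field_simp [hpv, hLv]
    ring
  have e4 : M * ((rv * D + 11 / 2 * pv - 8) * lv ^ 2) =
      2 * (Nr) * D ^ 3 * Lx ^ 4 + (11 / 2 * pv - 8) * (4 * D ^ 3 * Lx ^ 6) := by
    rw [hl, hr]; generalize xv ^ 2 - pv * xv - 1 = L at hLv ⊢; field_simp [hpv, hLv]
    ring
  have e5 : M * ((pv - 6) * lv) = (pv - 6) * (-4 * D ^ 4 * Lx ^ 5) := by
    rw [hl]; field_simp [hpv]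
  have key : (-4 * Lx ^ 9) + ((Nr) ^ 2 * Lx ^ 4 + (-2 * pv - 17 / 4) * (4 * D * Lx ^ 8)) +
      (-6 * (Nr) * D ^ 2 * Lx ^ 5 + (pv ^ 2 + 13 / 2 * pv + 5) * (-4 * D ^ 2 * Lx ^ 7)) -
      (2 * (Nr) * D ^ 3 * Lx ^ 4 + (11 / 2 * pv - 8) * (4 * D ^ 3 * Lx ^ 6)) +
      (pv - 6) * (-4 * D ^ 4 * Lx ^ 5) + 4 * (pv ^ 2 + 4) ^ 5 * (xv ^ 2 - pv * xv - 1) ^ 4 = 0 := by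
    ring
  have goal0 : M * (lv ^ 5 + (rv ^ 2 * (pv ^ 2 + 4) - 2 * pv - 17 / 4) * lv ^ 4 +
      (3 * rv * (pv ^ 2 + 4) + pv ^ 2 + 13 / 2 * pv + 5) * lv ^ 3 -
      (rv * (pv ^ 2 + 4) + 11 / 2 * pv - 8) * lv ^ 2 + (pv - 6) * lv + 1) = 0 := by
    linear_combination e1 + e2 + e3 - e4 + e5 + key
  exact (mul_eq_zero.mp goal0).resolve_left hM
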